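/- Let m ∈ G^1 and let κ ∈ G^0 be the unique series with m = 1 + κ(x m(x)) (the free cumulant series of m). Then the inverse of m in the group (G^1, •) is the Cauchy multiplicative inverse of 1 + κ: m^{•−1} · (1 + κ) = 1 = (1 + κ) · m^{•−1}. -/

import Mathlib

/-- Words over the alphabet of positive integers. -/
abbrev Word : Type := List ℕ+

variable {A : Type*}

/-- The constant series `1`: coefficient `1` on the empty word, `0` elsewhere. -/
def one [CommRing A] : Word → A := fun w => if w = [] then 1 else 0

/-- Cauchy product of noncommutative series:
`(f·g)(w) = Σ f(u) g(v)` over all factorizations `w = u ++ v`. -/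
def cauchy [CommRing A] (f g : Word → A) : Word → A := fun w =>
  ∑ k ∈ Finset.range (w.length + 1), f (w.take k) * g (w.drop k)

/-- The subword of `w` consisting of the letters at positions in `S` (in increasing order). -/
def subword (w : Word) (S : Finset ℕ) : Word :=
  ((w.zipIdx.map Prod.swap).filter (fun p => decide (p.1 ∈ S))).map Prod.snd

/-- The (possibly empty) factor of `w` occupying the positions strictly between `s` and the
next element of `S` after `s` (or the end of the word if there is no such element). -/
def gapAfter (w : Word) (S : Finset ℕ) (s : ℕ) : Word :=
  ((w.zipIdx.map Prod.swap).filter (fun p => decide (s < p.1 ∧ ∀ j ∈ S, j ≤ s ∨ p.1 < j))).map Prod.snd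

/-- Shifted substitution `f(xg(x))`: its constant coefficient is `f(∅)`, and its coefficient
on a nonempty word `w = a_1⋯a_n` is the sum, over subsets `S = {s_1<⋯<s_k}` of the positions
of `w` containing the first position, of `f(a_{s_1}⋯a_{s_k})·g(w_{(s_1,s_2)})⋯g(w_{(s_k,n+1)})`,
where `w_{(s_j,s_{j+1})}` is the factor of `w` strictly between positions `s_j` and `s_{j+1}`. -/
def subst [CommRing A] (f g : Word → A) : Word → A := fun w =>
  if w = [] then f []
  else ∑ S ∈ (Finset.range w.length).powerset.filter (fun S => 0 ∈ S),
    f (subword w S) * ∏ s ∈ S, g (gapAfter w S s)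

/-- Shifted composition `f • g := g · f(xg(x))`. -/
def bullet [CommRing A] (f g : Word → A) : Word → A := cauchy g (subst f g)
def subwordP (w : Word) (p : ℕ → Bool) : Word :=
  ((w.zipIdx.map Prod.swap).filter (fun q => p q.1)).map Prod.snd

lemma subwordP_nil (p : ℕ → Bool) : subwordP [] p = [] := rfl

lemma subwordP_cons (a : ℕ+) (w : Word) (p : ℕ → Bool) :
    subwordP (a :: w) p = (if p 0 then [a] else []) ++ subwordP w (fun i => p (i+1)) := by
  unfold subwordP
  rw [List.zipIdx_cons']
  by_cases h : p 0 <;> simp [h, List.filter_map, List.map_map, Function.comp_def]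

lemma subwordP_congr {w : Word} {p q : ℕ → Bool} (h : ∀ i < w.length, p i = q i) :
    subwordP w p = subwordP w q := by
  induction w generalizing p q with
  | nil => rfl
  | cons a w ih =>
    rw [subwordP_cons, subwordP_cons, h 0 (by simp),
      ih (fun i hi => h (i+1) (by simpa using hi))]

lemma subwordP_true (w : Word) : subwordP w (fun _ => true) = w := by
  induction w with
  | nil => rfl
  | cons a w ih => rw [subwordP_cons]; simpa using ih

lemma subwordP_false (w : Word) : subwordP w (fun _ => false) = [] := by
  induction w with
  | nil => rfl
  | cons a w ih => rw [subwordP_cons]; simpa using ih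

lemma subwordP_eq_nil_iff {w : Word} {p : ℕ → Bool} :
    subwordP w p = [] ↔ ∀ i < w.length, p i = false := by
  induction w generalizing p with
  | nil => simp [subwordP_nil]
  | cons a w ih =>
    rw [subwordP_cons]
    by_cases h : p 0
    · simp only [h, if_pos]
      constructor
      · intro H; exact absurd H (by simp)
      · intro H; exact absurd (H 0 (by simp)) (by simp [h])
    · rw [Bool.not_eq_true] at h
      rw [h, if_neg (by simp), List.nil_append, ih]
      constructor
      · intro H i hi
        cases i with
        | zero => exact h
        | succ j => exact H j (by simpa using hi)
      · intro H i hi; exact H (i+1) (by simpa using hi)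

lemma subwordP_drop (w : Word) (k : ℕ) (q : ℕ → Bool) :
    subwordP (w.drop k) q = subwordP w (fun i => decide (k ≤ i) && q (i - k)) := by
  induction w generalizing k with
  | nil => simp [subwordP_nil]
  | cons a w ih =>
    cases k with
    | zero =>
      simp only [List.drop_zero]
      exact subwordP_congr (fun i _ => by simp)
    | succ k =>
      rw [List.drop_succ_cons, ih, subwordP_cons, if_neg (by simp), List.nil_append]
      exact subwordP_congr (fun i _ => by
        have : (k ≤ i) = (k+1 ≤ i+1) := by simp
        have h2 : i - k = i + 1 - (k+1) := by omega
        rw [h2]; congr 1; simp)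

lemma subwordP_take (w : Word) (k : ℕ) :
    subwordP w (fun i => decide (i < k)) = w.take k := by
  induction w generalizing k with
  | nil => simp [subwordP_nil]
  | cons a w ih =>
    cases k with
    | zero =>
      rw [List.take_zero, ← subwordP_false (a :: w)]
      exact subwordP_congr (fun i _ => by simp)
    | succ k =>
      rw [subwordP_cons, if_pos (by simp), List.take_succ_cons,
        subwordP_congr (q := fun i => decide (i < k)) (fun i _ => by simp), ih]
      rfl

lemma subword_eq (w : Word) (S : Finset ℕ) :
    subword w S = subwordP w (fun i => decide (i ∈ S)) := rfl

lemma gapAfter_eq (w : Word) (S : Finset ℕ) (s : ℕ) :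
    gapAfter w S s = subwordP w (fun i => decide (s < i ∧ ∀ j ∈ S, j ≤ s ∨ i < j)) := rfl

-- singleton facts
lemma subword_cons_singleton (a : ℕ+) (w : Word) : subword (a :: w) {0} = [a] := by
  rw [subword_eq, subwordP_cons, if_pos (by simp)]
  rw [subwordP_congr (q := fun _ => false) (fun i _ => by simp), subwordP_false]; rfl

lemma gapAfter_cons_singleton (a : ℕ+) (w : Word) : gapAfter (a :: w) {0} 0 = w := by
  rw [gapAfter_eq, subwordP_cons, if_neg (by simp)]
  rw [subwordP_congr (q := fun _ => true) (fun i _ => by simp), subwordP_true]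
  simp

section shifted
variable (a : ℕ+) (w : Word) (k : ℕ) (S' : Finset ℕ)

lemma subword_shift :
    subword (a :: w) (insert 0 (S'.image (· + (k+1)))) = a :: subword (w.drop k) S' := by
  rw [subword_eq, subwordP_cons, if_pos (by simp), subword_eq, subwordP_drop]
  simp only [List.singleton_append, List.cons.injEq, true_and]
  refine subwordP_congr (fun i _ => ?_)
  rw [← Bool.decide_and, decide_eq_decide]
  simp only [Finset.mem_insert, Finset.mem_image]
  constructor
  · rintro (h | ⟨s', hs', h⟩)
    · omega
    · have hik : i - k = s' := by omega
      exact ⟨by omega, by rw [hik]; exact hs'⟩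
  · rintro ⟨hk, h⟩
    exact Or.inr ⟨i - k, h, by omega⟩

lemma gapAfter_shift_zero (h0 : 0 ∈ S') :
    gapAfter (a :: w) (insert 0 (S'.image (· + (k+1)))) 0 = w.take k := by
  rw [gapAfter_eq, subwordP_cons, if_neg (by simp), ← subwordP_take]
  simp only [List.nil_append]
  refine subwordP_congr (fun i _ => ?_)
  rw [decide_eq_decide]
  simp only [Finset.mem_insert, Finset.mem_image]
  constructor
  · rintro ⟨-, h⟩
    rcases h (k+1) (Or.inr ⟨0, h0, by omega⟩) with h' | h' <;> omega
  · intro hik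
    refine ⟨by omega, ?_⟩
    rintro j (rfl | ⟨t, ht, rfl⟩)
    · omega
    · omega

lemma gapAfter_shift (s' : ℕ) :
    gapAfter (a :: w) (insert 0 (S'.image (· + (k+1)))) (s' + (k+1))
      = gapAfter (w.drop k) S' s' := by
  rw [gapAfter_eq, subwordP_cons, if_neg (by simp), gapAfter_eq, subwordP_drop]
  simp only [List.nil_append]
  refine subwordP_congr (fun i _ => ?_)
  rw [← Bool.decide_and, decide_eq_decide]
  simp only [Finset.mem_insert, Finset.mem_image]
  constructor
  · rintro ⟨h1, h2⟩
    refine ⟨by omega, by omega, fun t ht => ?_⟩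
    rcases h2 (t + (k+1)) (Or.inr ⟨t, ht, rfl⟩) with h | h <;> omega
  · rintro ⟨hk, h1, h2⟩
    refine ⟨by omega, ?_⟩
    rintro j (rfl | ⟨t, ht, rfl⟩)
    · omega
    · rcases h2 t ht with h | h <;> omega

end shifted

lemma subst_nil [CommRing A] (f g : Word → A) : subst f g [] = f [] := rfl

lemma min_untop_image (k : ℕ) (S' : Finset ℕ) (h0 : 0 ∈ S') :
    WithTop.untopD 0 (S'.image (· + (k+1))).min = k + 1 := by
  have hne : (S'.image (· + (k+1))).Nonempty := ⟨k+1, Finset.mem_image.mpr ⟨0, h0, by omega⟩⟩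
  rw [← Finset.coe_min' hne, WithTop.untopD_coe]
  refine le_antisymm (Finset.min'_le _ _ (Finset.mem_image.mpr ⟨0, h0, by omega⟩))
    (Finset.le_min' _ _ _ (fun y hy => ?_))
  rcases Finset.mem_image.mp hy with ⟨t, _, rfl⟩; omega

lemma subst_cons [CommRing A] (f g : Word → A) (a : ℕ+) (w : Word) :
    subst f g (a :: w) = cauchy g (subst (fun v => f (a :: v)) g) w := by
  classical
  set n := w.length with hn
  have hRHS : cauchy g (subst (fun v => f (a :: v)) g) w
      = f [a] * g w
        + ∑ k ∈ Finset.range n, ∑ S' ∈ (Finset.range (n - k)).powerset.filter (fun S => 0 ∈ S),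
          g (w.take k) * (f (a :: subword (w.drop k) S') * ∏ s ∈ S', g (gapAfter (w.drop k) S' s)) := by
    rw [show cauchy g (subst (fun v => f (a :: v)) g) w
        = ∑ k ∈ Finset.range (n+1), g (w.take k) * subst (fun v => f (a :: v)) g (w.drop k) from rfl]
    rw [Finset.sum_range_succ, add_comm]
    congr 1
    · rw [List.take_length, List.drop_length, subst_nil, mul_comm]
    · refine Finset.sum_congr rfl (fun k hk => ?_)
      rw [Finset.mem_range] at hk
      have hd : w.drop k ≠ [] := by
        intro h
        have := congrArg List.length h
        simp only [List.length_drop, List.length_nil] at this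
        omega
      rw [subst, if_neg hd, List.length_drop, Finset.mul_sum]
  have hLHS : subst f g (a :: w)
      = f [a] * g w + ∑ S ∈ (((Finset.range (n+1)).powerset.filter (fun S => 0 ∈ S)).erase {0}),
          f (subword (a :: w) S) * ∏ s ∈ S, g (gapAfter (a :: w) S s) := by
    rw [subst, if_neg (by simp), List.length_cons]
    rw [← Finset.sum_erase_add _ _ (show ({0} : Finset ℕ) ∈
        (Finset.range (n+1)).powerset.filter (fun S => 0 ∈ S) by
      simp [Finset.singleton_subset_iff])]
    rw [add_comm]
    congr 1
    rw [subword_cons_singleton, Finset.prod_singleton, gapAfter_cons_singleton]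
  rw [hRHS, hLHS, Finset.sum_sigma']
  congr 1
  refine (Finset.sum_nbij'
    (fun x => insert 0 (x.2.image (· + (x.1+1))))
    (fun S => ⟨WithTop.untopD 0 (S.erase 0).min - 1,
      (S.erase 0).image (fun j => j - WithTop.untopD 0 (S.erase 0).min)⟩)
    ?_ ?_ ?_ ?_ ?_).symm
  -- hi
  · rintro ⟨k, S'⟩ hx
    rw [Finset.mem_sigma, Finset.mem_range, Finset.mem_filter, Finset.mem_powerset] at hx
    obtain ⟨hk, hsub, h0⟩ := hx
    dsimp only at hk hsub h0 ⊢
    rw [Finset.mem_erase, Finset.mem_filter, Finset.mem_powerset]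
    refine ⟨?_, ?_, by simp⟩
    · intro hEq
      have : k + 1 ∈ insert 0 (S'.image (· + (k+1))) :=
        Finset.mem_insert_of_mem (Finset.mem_image.mpr ⟨0, h0, by omega⟩)
      rw [hEq] at this
      simp at this
    · intro x hx
      rcases Finset.mem_insert.mp hx with rfl | hx
      · simp
      · rcases Finset.mem_image.mp hx with ⟨t, ht, rfl⟩
        have := hsub ht
        simp only [Finset.mem_range] at this ⊢
        omega
  -- hj
  · intro S hS
    rw [Finset.mem_erase, Finset.mem_filter, Finset.mem_powerset] at hS
    obtain ⟨hne, hsub, h0⟩ := hS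
    have hEne : (S.erase 0).Nonempty := by
      rw [Finset.nonempty_iff_ne_empty]
      intro h
      rcases (Finset.erase_eq_empty_iff S 0).mp h with h1 | h1
      · exact hne (by rw [h1] at h0; exact absurd h0 (by simp))
      · exact hne h1
    set m := WithTop.untopD 0 (S.erase 0).min with hm
    have hmm : m = (S.erase 0).min' hEne := by
      rw [hm, ← Finset.coe_min' hEne, WithTop.untopD_coe]
    have hmmem : m ∈ S.erase 0 := hmm ▸ Finset.min'_mem _ hEne
    have hm1 : 1 ≤ m := by
      rcases Finset.mem_erase.mp hmmem with ⟨h, _⟩; omega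
    have hmn : m ≤ n := by
      have := hsub (Finset.mem_erase.mp hmmem).2
      simp only [Finset.mem_range] at this; omega
    rw [Finset.mem_sigma, Finset.mem_range, Finset.mem_filter, Finset.mem_powerset]
    dsimp only
    refine ⟨by omega, ?_, Finset.mem_image.mpr ⟨m, hmmem, by omega⟩⟩
    intro x hx
    rcases Finset.mem_image.mp hx with ⟨t, ht, rfl⟩
    have h1 := hsub (Finset.mem_erase.mp ht).2
    simp only [Finset.mem_range] at h1 ⊢
    have h2 : m ≤ t := hmm ▸ Finset.min'_le _ _ ht
    omega
  -- left_inv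
  · rintro ⟨k, S'⟩ hx
    rw [Finset.mem_sigma, Finset.mem_range, Finset.mem_filter, Finset.mem_powerset] at hx
    obtain ⟨hk, hsub, h0⟩ := hx
    dsimp only at hk hsub h0 ⊢
    have hnm : (0 : ℕ) ∉ S'.image (· + (k+1)) := by simp
    rw [Finset.erase_insert hnm, min_untop_image k S' h0]
    refine Sigma.ext (by simp) (heq_of_eq ?_)
    dsimp only
    rw [Finset.image_image]
    rw [show ((fun j => j - (k+1)) ∘ (· + (k+1))) = id from funext (fun t => by simp)]
    rw [Finset.image_id]
  -- right_inv
  · intro S hS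
    rw [Finset.mem_erase, Finset.mem_filter, Finset.mem_powerset] at hS
    obtain ⟨hne, hsub, h0⟩ := hS
    dsimp only
    have hEne : (S.erase 0).Nonempty := by
      rw [Finset.nonempty_iff_ne_empty]
      intro h
      rcases (Finset.erase_eq_empty_iff S 0).mp h with h1 | h1
      · exact hne (by rw [h1] at h0; exact absurd h0 (by simp))
      · exact hne h1
    set m := WithTop.untopD 0 (S.erase 0).min with hm
    have hmm : m = (S.erase 0).min' hEne := by
      rw [hm, ← Finset.coe_min' hEne, WithTop.untopD_coe]
    have hm1 : 1 ≤ m := by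
      rcases Finset.mem_erase.mp (hmm ▸ Finset.min'_mem _ hEne) with ⟨h, _⟩; omega
    rw [Finset.image_image]
    have : m - 1 + 1 = m := by omega
    rw [this]
    have himg : ((S.erase 0).image ((· + m) ∘ (fun j => j - m))) = S.erase 0 := by
      rw [show ((· + m) ∘ (fun j => j - m)) = fun j => j - m + m from rfl]
      rw [Finset.image_congr (g := id) (fun x hx => by
        have h2 : m ≤ x := hmm ▸ Finset.min'_le _ _ hx
        simp; omega)]
      exact Finset.image_id
    rw [himg, Finset.insert_erase h0]
  -- h
  · rintro ⟨k, S'⟩ hx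
    rw [Finset.mem_sigma, Finset.mem_range, Finset.mem_filter, Finset.mem_powerset] at hx
    obtain ⟨hk, hsub, h0⟩ := hx
    dsimp only at hk hsub h0 ⊢
    have hnm : (0 : ℕ) ∉ S'.image (· + (k+1)) := by simp
    rw [subword_shift, Finset.prod_insert hnm, gapAfter_shift_zero a w k S' h0]
    rw [Finset.prod_image (fun x _ y _ h => by omega)]
    have : ∀ s' ∈ S', g (gapAfter (a :: w) (insert 0 (S'.image (· + (k+1)))) (s' + (k+1)))
        = g (gapAfter (w.drop k) S' s') := fun s' _ => by rw [gapAfter_shift]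
    rw [Finset.prod_congr rfl this]
    ring

section algebra
variable [CommRing A]

lemma cauchy_nil (f g : Word → A) : cauchy f g [] = f [] * g [] := by
  simp [cauchy]

lemma cauchy_cons (f g : Word → A) (a : ℕ+) (w : Word) :
    cauchy f g (a :: w) = f [] * g (a :: w) + cauchy (fun u => f (a :: u)) g w := by
  rw [cauchy, List.length_cons, Finset.sum_range_succ']
  simp only [List.take_succ_cons, List.drop_succ_cons, List.take_zero, List.drop_zero]
  rw [add_comm]
  rfl

lemma cauchy_left_linear (c : A) (p q h : Word → A) (w : Word) :
    cauchy (fun u => c * p u + q u) h w = c * cauchy p h w + cauchy q h w := by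
  rw [cauchy, cauchy, cauchy, Finset.mul_sum, ← Finset.sum_add_distrib]
  exact Finset.sum_congr rfl (fun k _ => by ring)

lemma cauchy_right_linear (c : A) (p q h : Word → A) (w : Word) :
    cauchy h (fun u => c * p u + q u) w = c * cauchy h p w + cauchy h q w := by
  rw [cauchy, cauchy, cauchy, Finset.mul_sum, ← Finset.sum_add_distrib]
  exact Finset.sum_congr rfl (fun k _ => by ring)

lemma one_cauchy (f : Word → A) : cauchy one f = f := by
  funext w
  cases w with
  | nil => simp [cauchy, one]
  | cons a w =>
    rw [cauchy, List.length_cons, Finset.sum_range_succ']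
    simp only [List.take_succ_cons, List.drop_succ_cons, List.take_zero, List.drop_zero]
    have h1 : ∀ i, one (a :: List.take i w) = (0 : A) := fun i => by simp [one]
    simp only [h1, zero_mul, Finset.sum_const_zero, zero_add]
    simp [one]

lemma cauchy_one (f : Word → A) : cauchy f one = f := by
  funext w
  rw [cauchy, Finset.sum_range_succ, List.take_length, List.drop_length]
  have h1 : ∀ k ∈ Finset.range w.length, f (w.take k) * one (w.drop k) = 0 := by
    intro k hk
    rw [Finset.mem_range] at hk
    have : w.drop k ≠ [] := by
      intro h
      have := congrArg List.length h
      simp only [List.length_drop, List.length_nil] at this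
      omega
    simp [one, this]
  rw [Finset.sum_congr rfl h1]
  simp [one]

lemma cauchy_assoc (f g h : Word → A) (w : Word) :
    cauchy (cauchy f g) h w = cauchy f (cauchy g h) w := by
  induction w generalizing f with
  | nil => simp [cauchy_nil]; ring
  | cons a w ih =>
    rw [cauchy_cons, cauchy_nil, cauchy_cons, cauchy_cons]
    have e1 : (fun u => cauchy f g (a :: u))
        = fun u => f [] * g (a :: u) + cauchy (fun v => f (a :: v)) g u :=
      funext (fun u => cauchy_cons f g a u)
    rw [e1, cauchy_left_linear, ih]
    ring

lemma cauchy_congr_right {Y Y' : Word → A} (X : Word → A) {w : Word}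
    (h : ∀ v : Word, v.length ≤ w.length → Y v = Y' v) :
    cauchy X Y w = cauchy X Y' w := by
  rw [cauchy, cauchy]
  refine Finset.sum_congr rfl (fun k _ => ?_)
  rw [h (w.drop k) (by simp)]

lemma subst_combo (c : A) (f₁ f₂ g : Word → A) (w : Word) :
    subst (fun v => c * f₁ v + f₂ v) g w = c * subst f₁ g w + subst f₂ g w := by
  rw [subst, subst, subst]
  split
  · rfl
  · rw [Finset.mul_sum, ← Finset.sum_add_distrib]
    exact Finset.sum_congr rfl (fun S _ => by ring)

lemma subst_add (f₁ f₂ g : Word → A) (w : Word) :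
    subst (fun v => f₁ v + f₂ v) g w = subst f₁ g w + subst f₂ g w := by
  have := subst_combo 1 f₁ f₂ g w
  simpa using this

lemma subst_one_left (g : Word → A) : subst one g = one := by
  funext w
  cases w with
  | nil => rfl
  | cons a w =>
    rw [subst, if_neg (by simp)]
    rw [show (one (a :: w) : A) = 0 from by simp [one]]
    refine Finset.sum_eq_zero (fun S hS => ?_)
    rw [Finset.mem_filter] at hS
    have h0 : 0 ∈ S := hS.2
    have : subword (a :: w) S ≠ [] := by
      rw [subword_eq, subwordP_cons, if_pos (by simp [h0])]
      simp
    simp [one, this]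

lemma subword_range (w : Word) : subword w (Finset.range w.length) = w := by
  rw [subword_eq, subwordP_congr (q := fun _ => true) (fun i hi => by simp [hi]), subwordP_true]

lemma gapAfter_range (w : Word) (s : ℕ) : gapAfter w (Finset.range w.length) s = [] := by
  rw [gapAfter_eq, subwordP_eq_nil_iff]
  intro i hi
  rw [decide_eq_false_iff_not]
  rintro ⟨h1, h2⟩
  rcases h2 i (Finset.mem_range.mpr hi) with h | h <;> omega

lemma subst_one_right (f : Word → A) : subst f one = f := by
  funext w
  cases w with
  | nil => rfl
  | cons a w =>
    rw [subst, if_neg (by simp)]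
    rw [Finset.sum_eq_single_of_mem (Finset.range (a :: w).length)
      (by
        rw [Finset.mem_filter, Finset.mem_powerset]
        exact ⟨le_refl _, by simp⟩)
      (fun S hS hne => ?_)]
    · rw [subword_range]
      have : ∀ s ∈ Finset.range (a :: w).length, (one (gapAfter (a :: w) (Finset.range (a :: w).length) s) : A) = 1 := by
        intro s _
        rw [gapAfter_range]
        simp [one]
      rw [Finset.prod_congr rfl this]
      simp
    · -- S ≠ range n: some gap nonempty
      rw [Finset.mem_filter, Finset.mem_powerset] at hS
      obtain ⟨hsub, h0⟩ := hS
      have hss : S ⊂ Finset.range (a :: w).length := lt_of_le_of_ne hsub hne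
      obtain ⟨i, hi, hiS⟩ := Finset.exists_of_ssubset hss
      have hi0 : 0 < i := by
        rcases Nat.eq_zero_or_pos i with rfl | h
        · exact absurd h0 hiS
        · exact h
      have hB : 0 ∈ S.filter (· < i) := by
        rw [Finset.mem_filter]; exact ⟨h0, hi0⟩
      set s := (S.filter (· < i)).max' ⟨0, hB⟩ with hs
      have hsmem : s ∈ S.filter (· < i) := Finset.max'_mem _ _
      rw [Finset.mem_filter] at hsmem
      have hgap : gapAfter (a :: w) S s ≠ [] := by
        rw [gapAfter_eq]
        intro h
        rw [subwordP_eq_nil_iff] at h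
        have := h i (Finset.mem_range.mp hi)
        rw [decide_eq_false_iff_not] at this
        refine this ⟨hsmem.2, fun j hj => ?_⟩
        rcases lt_trichotomy j i with h' | rfl | h'
        · exact Or.inl (Finset.le_max' (S.filter (· < i)) j (Finset.mem_filter.mpr ⟨hj, h'⟩))
        · exact absurd hj hiS
        · exact Or.inr h'
      rw [Finset.prod_eq_zero hsmem.1 (by simp [one, hgap])]
      ring

end algebra

section comp
variable [CommRing A]

lemma subst_cauchy (h : Word → A) :
    ∀ n (w : Word), w.length ≤ n → ∀ p q : Word → A,
      subst (cauchy p q) h w = cauchy (subst p h) (subst q h) w := by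
  intro n
  induction n with
  | zero =>
    intro w hw p q
    have : w = [] := List.eq_nil_of_length_eq_zero (by omega)
    subst this
    rw [subst_nil, cauchy_nil, cauchy_nil, subst_nil, subst_nil]
  | succ n ih =>
    intro w hw p q
    cases w with
    | nil => rw [subst_nil, cauchy_nil, cauchy_nil, subst_nil, subst_nil]
    | cons a w' =>
      have hw' : w'.length ≤ n := by
        simp only [List.length_cons] at hw; omega
      rw [subst_cons]
      have e1 : (fun v => cauchy p q (a :: v))
          = fun v => p [] * q (a :: v) + cauchy (fun u => p (a :: u)) q v :=
        funext (fun v => cauchy_cons p q a v)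
      rw [e1]
      have e2 : (subst (fun v => p [] * q (a :: v) + cauchy (fun u => p (a :: u)) q v) h)
          = fun u => p [] * subst (fun v => q (a :: v)) h u
              + subst (cauchy (fun u => p (a :: u)) q) h u :=
        funext (fun u => subst_combo (p []) _ _ h u)
      rw [e2]
      have e3 : cauchy h (fun u => p [] * subst (fun v => q (a :: v)) h u
              + subst (cauchy (fun u => p (a :: u)) q) h u) w'
          = cauchy h (fun u => p [] * subst (fun v => q (a :: v)) h u
              + cauchy (subst (fun u => p (a :: u)) h) (subst q h) u) w' := by
        refine cauchy_congr_right h (fun v hv => ?_)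
        rw [ih v (by omega)]
      rw [e3, cauchy_right_linear]
      -- RHS
      rw [cauchy_cons, subst_nil, subst_cons]
      have e4 : (fun u => subst p h (a :: u)) = cauchy h (subst (fun v => p (a :: v)) h) :=
        funext (fun u => subst_cons p h a u)
      rw [e4, ← cauchy_assoc]

lemma subst_subst (g h : Word → A) :
    ∀ n (w : Word), w.length ≤ n → ∀ f : Word → A,
      subst (subst f g) h w = subst f (bullet g h) w := by
  intro n
  induction n with
  | zero =>
    intro w hw f
    have : w = [] := List.eq_nil_of_length_eq_zero (by omega)
    subst this
    rw [subst_nil, subst_nil, subst_nil]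
  | succ n ih =>
    intro w hw f
    cases w with
    | nil => rw [subst_nil, subst_nil, subst_nil]
    | cons a w' =>
      have hw' : w'.length ≤ n := by
        simp only [List.length_cons] at hw; omega
      rw [subst_cons, subst_cons]
      have e1 : (fun v => subst f g (a :: v)) = cauchy g (subst (fun v => f (a :: v)) g) :=
        funext (fun v => subst_cons f g a v)
      rw [e1]
      have e2 : (subst (cauchy g (subst (fun v => f (a :: v)) g)) h)
          = fun u => subst (cauchy g (subst (fun v => f (a :: v)) g)) h u := rfl
      have e3 : cauchy h (subst (cauchy g (subst (fun v => f (a :: v)) g)) h) w'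
          = cauchy h (cauchy (subst g h) (subst (fun v => f (a :: v)) (bullet g h))) w' := by
        refine cauchy_congr_right h (fun v hv => ?_)
        rw [subst_cauchy h (n := v.length) v (le_refl _)]
        refine cauchy_congr_right _ (fun u hu => ?_)
        exact ih u (by omega) _
      rw [e3, ← cauchy_assoc]
      rfl

end comp

section inv
variable [CommRing A]

def rinvAux (a : Word → A) : ℕ → Word → A
  | 0, w => if w = [] then 1 else 0
  | (n+1), w => if w = [] then 1 else
      - ∑ i ∈ Finset.range w.length, a (w.take (i+1)) * rinvAux a n (w.drop (i+1))

def rinv (a : Word → A) : Word → A := fun w => rinvAux a w.length w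

lemma rinvAux_stable2 (a : Word → A) :
    ∀ n m (w : Word), w.length ≤ n → w.length ≤ m → rinvAux a n w = rinvAux a m w := by
  intro n
  induction n with
  | zero =>
    intro m w hn _
    have : w = [] := List.eq_nil_of_length_eq_zero (by omega)
    subst this
    cases m <;> rfl
  | succ n ih =>
    intro m w hn hm
    cases w with
    | nil => cases m <;> rfl
    | cons b v =>
      have hm1 : ∃ m', m = m' + 1 := by
        cases m
        · simp at hm
        · exact ⟨_, rfl⟩
      obtain ⟨m', rfl⟩ := hm1
      rw [rinvAux, rinvAux, if_neg (by simp), if_neg (by simp)]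
      congr 1
      refine Finset.sum_congr rfl (fun i hi => ?_)
      rw [Finset.mem_range] at hi
      congr 1
      refine ih m' _ ?_ ?_ <;> (simp only [List.length_drop, List.length_cons] at *; omega)

lemma rinvAux_stable (a : Word → A) (n : ℕ) (w : Word) (h : w.length ≤ n) :
    rinvAux a n w = rinv a w :=
  rinvAux_stable2 a n w.length w h (le_refl _)

lemma cauchy_rinv (a : Word → A) (ha : a [] = 1) : cauchy a (rinv a) = one := by
  funext w
  cases w with
  | nil => simp [cauchy_nil, rinv, rinvAux, ha, one]
  | cons b v =>
    have hne : (b :: v : Word) ≠ [] := by simp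
    have hX : rinv a (b :: v) = - ∑ i ∈ Finset.range (v.length + 1),
        a ((b :: v).take (i+1)) * rinv a ((b :: v).drop (i+1)) := by
      rw [rinv]
      show rinvAux a (v.length + 1) (b :: v) = _
      rw [rinvAux, if_neg hne]
      congr 1
      refine Finset.sum_congr (by simp) (fun i hi => ?_)
      rw [Finset.mem_range] at hi
      congr 1
      refine rinvAux_stable a _ _ ?_
      simp only [List.length_drop, List.length_cons]; omega
    rw [cauchy]
    rw [show (b :: v : Word).length + 1 = (v.length + 1) + 1 from by simp]
    rw [Finset.sum_range_succ']
    simp only [List.take_zero, List.drop_zero, ha, one_mul]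
    rw [hX, show (one (b :: v) : A) = 0 from by simp [one]]
    exact add_neg_cancel _

end inv


/-- if `κ ∈ G^0` is the free cumulant series of `m ∈ G^1` (that is,
`m = 1 + κ(x m(x))`) and `m⁻¹` is the `•`-inverse of `m` in the group `(G^1, •)`, then
`m⁻¹` is the Cauchy multiplicative inverse of `1 + κ`. -/
theorem stmt12 [Field A] [CharZero A] (m κ minv : Word → A)
    (hm : m [] = 1) (hκ : κ [] = 0) (hmc : ∀ w, m w = one w + subst κ m w)
    (hminv : minv [] = 1) (hinv₁ : bullet minv m = one) (hinv₂ : bullet m minv = one) :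
    cauchy minv (fun w => one w + κ w) = one ∧
    cauchy (fun w => one w + κ w) minv = one := by
  have hM : subst m minv = fun w => one w + κ w := by
    funext w
    have hmfun : m = fun v => one v + subst κ m v := funext hmc
    calc subst m minv w = subst (fun v => one v + subst κ m v) minv w := by rw [← hmfun]
      _ = subst one minv w + subst (subst κ m) minv w := subst_add _ _ _ w
      _ = one w + subst κ (bullet m minv) w := by
          rw [subst_one_left, subst_subst m minv w.length w (le_refl _) κ]
      _ = one w + κ w := by rw [hinv₂, subst_one_right]
  have goal1 : cauchy minv (fun w => one w + κ w) = one := by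
    rw [← hM]; exact hinv₂
  refine ⟨goal1, ?_⟩
  have ha : (fun w => one w + κ w) [] = (1 : A) := by simp [one, hκ]
  have hX := cauchy_rinv (fun w => one w + κ w) ha
  have hmX : minv = rinv (fun w => one w + κ w) := by
    calc minv = cauchy minv one := (cauchy_one minv).symm
      _ = cauchy minv (cauchy (fun w => one w + κ w) (rinv (fun w => one w + κ w))) := by
            rw [hX]
      _ = cauchy (cauchy minv (fun w => one w + κ w)) (rinv (fun w => one w + κ w)) := by
            funext w; exact (cauchy_assoc _ _ _ w).symm
      _ = cauchy one (rinv (fun w => one w + κ w)) := by rw [goal1]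
      _ = rinv (fun w => one w + κ w) := one_cauchy _
  rw [hmX]
  exact hX
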